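/- Let k ≥ 0 and n ≥ k+2, and let X be a homogeneous and spatially independent random subcomplex of Δₙ. Let T ⊆ Δₙ be a (k+1)-tree with P(T ⊆ X) > 0, and let σ₁, σ₂, …, σ_i be (k+1)-simplices of Δₙ none of which belongs to T. Then P(σ_j ∉ X for all j = 1,…,i | T ⊆ X) ≥ 1 − i·s_k. -/

import Mathlib

open MeasureTheory Finset Filter


/-- A (sub)complex of the complete complex on the vertex type `V`:
a family of finite subsets closed under taking subsets and containing `∅`. -/
def SComplex {V : Type*} [DecidableEq V] (Y : Finset (Finset V)) : Prop :=
  ∅ ∈ Y ∧ ∀ σ ∈ Y, ∀ τ ∈ σ.powerset, τ ∈ Y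

instance {V : Type*} [DecidableEq V] :
    DecidablePred (fun Y : Finset (Finset V) => SComplex Y) :=
  fun Y => decidable_of_iff (∅ ∈ Y ∧ ∀ σ ∈ Y, ∀ τ ∈ σ.powerset, τ ∈ Y) Iff.rfl

/-- `scount Y m` = number of simplices of `Y` with `m` vertices (i.e. `(m-1)`-simplices);
`f_k(Y) = scount Y (k+1)` and `f_{-1}(Y) = scount Y 0`. -/
def scount {V : Type*} (Y : Finset (Finset V)) (m : ℕ) : ℕ :=
  (Y.filter (fun σ => σ.card = m)).card

/-- Number of external `i`-simplices of `Y` in the complete complex on `Fin n`: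
`i`-simplices `σ ∉ Y` all of whose strict subsets lie in `Y`. -/
def ecount {n : ℕ} (Y : Finset (Finset (Fin n))) (i : ℕ) : ℕ :=
  (Finset.univ.filter (fun σ : Finset (Fin n) =>
    σ.card = i + 1 ∧ σ ∉ Y ∧ ∀ τ ∈ σ.powerset, τ ≠ σ → τ ∈ Y)).card

/-- The weight `∏_{i=0}^{n-1} p_i^{f_i(Y)} (1-p_i)^{e_i(Y)}` of the
multi-parameter random simplicial complex model. -/
noncomputable def mpWeight {n : ℕ} (p : Fin n → ℝ) (Y : Finset (Finset (Fin n))) : ℝ :=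
  ∏ i : Fin n, p i ^ scount Y (i.1 + 1) * (1 - p i) ^ ecount Y i.1

/-- The probability of an event, as a real number. -/
noncomputable def prb {Ω : Type*} [MeasurableSpace Ω] (μ : Measure Ω) (A : Set Ω) : ℝ :=
  (μ A).toReal

/-- Conditional probability `P(A | B)`, as a real number. -/
noncomputable def condP {Ω : Type*} [MeasurableSpace Ω] (μ : Measure Ω) (A B : Set Ω) : ℝ :=
  prb μ (A ∩ B) / prb μ B

/-- A random subcomplex is homogeneous if its distribution is invariant under
every permutation of the vertices. -/
def Homogeneous {n : ℕ} {Ω : Type*} [MeasurableSpace Ω] (μ : Measure Ω)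
    (X : Ω → Finset (Finset (Fin n))) : Prop :=
  ∀ (g : Equiv.Perm (Fin n)) (Y : Finset (Finset (Fin n))),
    prb μ {ω | Finset.image (fun σ => σ.image (⇑g)) (X ω) = Y} = prb μ {ω | X ω = Y}

/-- Spatial independence of a random subcomplex. -/
def SpatInd {n : ℕ} {Ω : Type*} [MeasurableSpace Ω] (μ : Measure Ω)
    (X : Ω → Finset (Finset (Fin n))) : Prop :=
  ∀ Y₁ Y₂ : Finset (Finset (Fin n)), SComplex Y₁ → SComplex Y₂ →
    prb μ {ω | Y₁ ∪ Y₂ ⊆ X ω} * prb μ {ω | Y₁ ∩ Y₂ ⊆ X ω} =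
      prb μ {ω | Y₁ ⊆ X ω} * prb μ {ω | Y₂ ⊆ X ω}

/-- The `k`-dimensional standard simplex `{0, 1, …, k}` in `Fin n`
(for `k = -1` this is the empty simplex). -/
def stdSimp (n : ℕ) (k : ℤ) : Finset (Fin n) :=
  Finset.univ.filter (fun v => (v : ℤ) ≤ k)

/-- The `k`-dimensional simplex `{1, 2, …, k+1}` in `Fin n`,
sharing `k` vertices with `stdSimp n k`. -/
def stdSimp' (n : ℕ) (k : ℕ) : Finset (Fin n) :=
  Finset.univ.filter (fun v => 1 ≤ (v : ℕ) ∧ (v : ℕ) ≤ k + 1)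

/-- The parameter `q_k = P(τ ∈ X)` for a `k`-simplex `τ` (with `q_{-1} = 1`). -/
noncomputable def qpar {n : ℕ} {Ω : Type*} [MeasurableSpace Ω] (μ : Measure Ω)
    (X : Ω → Finset (Finset (Fin n))) (k : ℤ) : ℝ :=
  if k < 0 then 1 else prb μ {ω | stdSimp n k ∈ X ω}

/-- The parameter `r_k = P(σ ∈ X | τ ∈ X)` for a `(k+1)`-simplex `σ` containing the
`k`-simplex `τ`, if `q_k > 0`, and `0` otherwise (with `r_{-1} = q_0`). -/
noncomputable def rpar {n : ℕ} {Ω : Type*} [MeasurableSpace Ω] (μ : Measure Ω)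
    (X : Ω → Finset (Finset (Fin n))) (k : ℤ) : ℝ :=
  if 0 < qpar μ X k then
    condP μ {ω | stdSimp n (k + 1) ∈ X ω} {ω | stdSimp n k ∈ X ω}
  else 0

/-- The parameter `s_k = P(τ₁ ∪ τ₂ ∈ X | τ₁ ∈ X, τ₂ ∈ X)` for `k`-simplices `τ₁, τ₂`
sharing `k` vertices, if `P(τ₁ ∈ X, τ₂ ∈ X) > 0`, and `0` otherwise. -/
noncomputable def spar {n : ℕ} {Ω : Type*} [MeasurableSpace Ω] (μ : Measure Ω)
    (X : Ω → Finset (Finset (Fin n))) (k : ℕ) : ℝ :=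
  if 0 < prb μ ({ω | stdSimp n k ∈ X ω} ∩ {ω | stdSimp' n k ∈ X ω}) then
    condP μ {ω | stdSimp n (k + 1) ∈ X ω}
      ({ω | stdSimp n k ∈ X ω} ∩ {ω | stdSimp' n k ∈ X ω})
  else 0


/-- `SimpRootedTree n k T τ` : the simplicial complex `T` on `Fin n` is a `k`-rooted tree
with root the `k`-simplex `τ`, i.e. it is obtained from the full simplex on `τ` by
repeatedly attaching, to a `k`-simplex `τ'` already present, all subsets of
`τ' ∪ {v}` for a fresh vertex `v`. A `(k+1)`-tree is a complex admitting such a root. -/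
inductive SimpRootedTree (n k : ℕ) : Finset (Finset (Fin n)) → Finset (Fin n) → Prop
  | base (τ : Finset (Fin n)) (hτ : τ.card = k + 1) : SimpRootedTree n k τ.powerset τ
  | attach (T : Finset (Finset (Fin n))) (τ τ' : Finset (Fin n)) (v : Fin n)
      (hT : SimpRootedTree n k T τ) (hτ' : τ' ∈ T) (hcard : τ'.card = k + 1)
      (hv : ∀ σ ∈ T, v ∉ σ) :
      SimpRootedTree n k (T ∪ (insert v τ').powerset) τ


/-! ### Auxiliary lemmas -/

section Aux

lemma scomplex_powerset' {V : Type*} [DecidableEq V] (s : Finset V) : SComplex s.powerset :=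
  ⟨Finset.empty_mem_powerset s, fun σ hσ τ hτ =>
    Finset.mem_powerset.2 ((Finset.mem_powerset.1 hτ).trans (Finset.mem_powerset.1 hσ))⟩

lemma scomplex_union' {V : Type*} [DecidableEq V] {A B : Finset (Finset V)}
    (hA : SComplex A) (hB : SComplex B) : SComplex (A ∪ B) := by
  refine ⟨Finset.mem_union_left _ hA.1, fun σ hσ τ hτ => ?_⟩
  rcases Finset.mem_union.1 hσ with h | h
  · exact Finset.mem_union_left _ (hA.2 σ h τ hτ)
  · exact Finset.mem_union_right _ (hB.2 σ h τ hτ)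

lemma tree_scomplex {n k : ℕ} {T : Finset (Finset (Fin n))} {τ : Finset (Fin n)}
    (h : SimpRootedTree n k T τ) : SComplex T := by
  induction h with
  | base τ hτ => exact scomplex_powerset' τ
  | attach T τ τ' v hT hτ' hcard hv ih => exact scomplex_union' ih (scomplex_powerset' _)

lemma tree_missing_pair {n k : ℕ} {T : Finset (Finset (Fin n))} {τ₀ : Finset (Fin n)}
    (h : SimpRootedTree n k T τ₀) :
    ∀ σ : Finset (Fin n), σ.card = k + 2 → σ ∉ T →
      ∃ a ∈ σ, ∃ b ∈ σ, a ≠ b ∧ ({a, b} : Finset (Fin n)) ∉ T := by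
  induction h with
  | base τ hτ =>
    intro σ hcard hσ
    have hex : ∃ a ∈ σ, a ∉ τ := by
      by_contra hc
      push_neg at hc
      have := Finset.card_le_card hc
      omega
    obtain ⟨a, haσ, haτ⟩ := hex
    have : (σ.erase a).Nonempty := by
      rw [← Finset.card_pos, Finset.card_erase_of_mem haσ]; omega
    obtain ⟨b, hb⟩ := this
    refine ⟨a, haσ, b, Finset.mem_of_mem_erase hb, (Finset.ne_of_mem_erase hb).symm, ?_⟩
    intro hmem
    exact haτ ((Finset.mem_powerset.1 hmem) (Finset.mem_insert_self a _))
  | attach T τ τ' v hT hτ' hcard hv ih =>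
    intro σ hσcard hσ
    have hσT : σ ∉ T := fun h => hσ (Finset.mem_union_left _ h)
    by_cases hvσ : v ∈ σ
    · by_cases hall : ∀ x ∈ σ.erase v, ({v, x} : Finset (Fin n)) ∈ T ∪ (insert v τ').powerset
      · exfalso
        have hsub : σ.erase v ⊆ τ' := by
          intro x hx
          have := hall x hx
          rcases Finset.mem_union.1 this with h | h
          · exact absurd (Finset.mem_insert_self v {x}) (fun hm => hv _ h hm)
          · have hss := Finset.mem_powerset.1 h
            have hxmem : x ∈ insert v τ' :=
              hss (Finset.mem_insert_of_mem (Finset.mem_singleton_self x))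
            rcases Finset.mem_insert.1 hxmem with h' | h'
            · exact absurd h' (Finset.ne_of_mem_erase hx)
            · exact h'
        have heq : σ.erase v = τ' := by
          apply Finset.eq_of_subset_of_card_le hsub
          rw [Finset.card_erase_of_mem hvσ, hσcard, hcard]
          omega
        have : σ = insert v τ' := by
          rw [← heq, Finset.insert_erase hvσ]
        exact hσ (Finset.mem_union_right _ (by rw [this]; exact Finset.mem_powerset_self _))
      · push_neg at hall
        obtain ⟨b, hbv, hb⟩ := hall
        exact ⟨v, hvσ, b, Finset.mem_of_mem_erase hbv, (Finset.ne_of_mem_erase hbv).symm, hb⟩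
    · obtain ⟨a, ha, b, hb, hab, habT⟩ := ih σ hσcard hσT
      refine ⟨a, ha, b, hb, hab, ?_⟩
      intro hmem
      rcases Finset.mem_union.1 hmem with h | h
      · exact habT h
      · have hss := Finset.mem_powerset.1 h
        have hsub : ({a, b} : Finset (Fin n)) ⊆ τ' := by
          intro x hx
          have hxv : x ≠ v := by
            rintro rfl
            rcases Finset.mem_insert.1 hx with h' | h'
            · exact hvσ (h' ▸ ha)
            · exact hvσ ((Finset.mem_singleton.1 h') ▸ hb)
          rcases Finset.mem_insert.1 (hss hx) with h' | h'
          · exact absurd h' hxv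
          · exact h'
        exact habT ((tree_scomplex hT).2 τ' hτ' _ (Finset.mem_powerset.2 hsub))

lemma mem_stdSimp {n : ℕ} {m : ℕ} {v : Fin n} : v ∈ stdSimp n m ↔ (v : ℕ) ≤ m := by
  simp only [stdSimp, Finset.mem_filter, Finset.mem_univ, true_and]
  exact_mod_cast Iff.rfl

lemma mem_stdSimp' {n k : ℕ} {v : Fin n} :
    v ∈ stdSimp' n k ↔ 1 ≤ (v : ℕ) ∧ (v : ℕ) ≤ k + 1 := by
  simp [stdSimp']

lemma card_stdSimp (n m : ℕ) (h : m < n) : (stdSimp n m).card = m + 1 := by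
  have h' : m + 1 ≤ n := h
  have : stdSimp n (m : ℤ) =
      Finset.map ⟨Fin.castLE h', Fin.castLE_injective h'⟩ Finset.univ := by
    ext x
    simp only [Finset.mem_map, Finset.mem_univ, Function.Embedding.coeFn_mk, true_and]
    rw [mem_stdSimp]
    constructor
    · intro hx
      exact ⟨⟨(x : ℕ), by omega⟩, Fin.ext (by simp [Fin.castLE])⟩
    · rintro ⟨j, rfl⟩
      simpa using Nat.lt_succ_iff.1 j.isLt
  rw [this, Finset.card_map, Finset.card_univ, Fintype.card_fin]

lemma card_stdSimp' (n k : ℕ) (h : k + 2 ≤ n) : (stdSimp' n k).card = k + 1 := by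
  have : stdSimp' n k =
      Finset.map ⟨fun j : Fin (k+1) => (⟨(j : ℕ) + 1, by omega⟩ : Fin n),
        fun x y hxy => by
          simp only [Fin.mk.injEq, Nat.add_right_cancel_iff] at hxy
          exact Fin.ext hxy⟩ Finset.univ := by
    ext x
    simp only [Finset.mem_map, Finset.mem_univ, Function.Embedding.coeFn_mk, true_and]
    rw [mem_stdSimp']
    constructor
    · rintro ⟨h1, h2⟩
      exact ⟨⟨(x : ℕ) - 1, by omega⟩, by ext; change (x : ℕ) - 1 + 1 = x; omega⟩
    · rintro ⟨j, rfl⟩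
      constructor
      · change 1 ≤ (j : ℕ) + 1; omega
      · have := j.isLt; change (j : ℕ) + 1 ≤ k + 1; omega
  rw [this, Finset.card_map, Finset.card_univ, Fintype.card_fin]

lemma exists_perm_std (n k : ℕ) (hn : k + 2 ≤ n) (σ : Finset (Fin n))
    (hσ : σ.card = k + 2) (a b : Fin n) (ha : a ∈ σ) (hb : b ∈ σ) (hab : a ≠ b) :
    ∃ g : Equiv.Perm (Fin n),
      Finset.image (⇑g) (stdSimp n ((k + 1 : ℕ) : ℤ)) = σ ∧
      Finset.image (⇑g) (stdSimp n (k : ℤ)) = σ.erase a ∧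
      Finset.image (⇑g) (stdSimp' n k) = σ.erase b := by
  classical
  set s := stdSimp n ((k + 1 : ℕ) : ℤ) with hs
  have hscard : s.card = k + 2 := by
    rw [hs, card_stdSimp n (k+1) (by omega)]
  set zero : Fin n := (⟨0, by omega⟩ : Fin n) with hzdef
  set top : Fin n := (⟨k + 1, by omega⟩ : Fin n) with htdef
  have hzero : zero ∈ s := by
    show zero ∈ stdSimp n ((k + 1 : ℕ) : ℤ)
    rw [mem_stdSimp]; simp [hzdef]
  have htop : top ∈ s := by
    show top ∈ stdSimp n ((k + 1 : ℕ) : ℤ)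
    rw [mem_stdSimp]
  have hzt : zero ≠ top := by
    intro h
    have := congrArg Fin.val h
    simp [hzdef, htdef] at this
  have hcards : Fintype.card ↥s = Fintype.card ↥σ := by
    simp [Fintype.card_coe, hscard, hσ]
  let zz : ↥s := ⟨zero, hzero⟩
  let oo : ↥s := ⟨top, htop⟩
  let aa : ↥σ := ⟨a, ha⟩
  let bb : ↥σ := ⟨b, hb⟩
  let e0 : ↥s ≃ ↥σ := Fintype.equivOfCardEq hcards
  let e1 : ↥s ≃ ↥σ := e0.trans (Equiv.swap (e0 zz) bb)
  have he1z : e1 zz = bb := by simp [e1]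
  let e : ↥s ≃ ↥σ := e1.trans (Equiv.swap (e1 oo) aa)
  have heo : e oo = aa := by simp [e]
  have hez : e zz = bb := by
    have h1 : e1 zz ≠ e1 oo := by
      intro h
      exact hzt (congrArg Subtype.val (e1.injective h))
    have h2 : e1 zz ≠ aa := by
      rw [he1z]
      exact fun h => hab (congrArg Subtype.val h).symm
    calc e zz = Equiv.swap (e1 oo) aa (e1 zz) := rfl
      _ = e1 zz := Equiv.swap_apply_of_ne_of_ne h1 h2
      _ = bb := he1z
  have hcardc : Fintype.card {x // ¬ x ∈ s} = Fintype.card {x // ¬ x ∈ σ} := by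
    rw [Fintype.card_subtype_compl, Fintype.card_subtype_compl,
      Fintype.card_coe, Fintype.card_coe, hscard, hσ]
  let ec : {x // ¬ x ∈ s} ≃ {x // ¬ x ∈ σ} := Fintype.equivOfCardEq hcardc
  let g : Equiv.Perm (Fin n) := Equiv.subtypeCongr e ec
  have hg : ∀ x (hx : x ∈ s), g x = (e ⟨x, hx⟩ : Fin n) := by
    intro x hx
    simp [g, Equiv.subtypeCongr, hx]
  have hgmem : ∀ x ∈ s, g x ∈ σ := fun x hx => by rw [hg x hx]; exact (e ⟨x, hx⟩).2
  have hgtop : g top = a := by rw [hg top htop]; exact congrArg _ heo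
  have hgzero : g zero = b := by rw [hg zero hzero]; exact congrArg _ hez
  refine ⟨g, ?_, ?_, ?_⟩
  · apply Finset.eq_of_subset_of_card_le
    · intro y hy
      obtain ⟨x, hx, rfl⟩ := Finset.mem_image.1 hy
      exact hgmem x hx
    · rw [Finset.card_image_of_injective _ g.injective, hscard, hσ]
  · apply Finset.eq_of_subset_of_card_le
    · intro y hy
      obtain ⟨x, hx, rfl⟩ := Finset.mem_image.1 hy
      have hxs : x ∈ s := by
        rw [hs, mem_stdSimp]
        rw [mem_stdSimp] at hx
        omega
      refine Finset.mem_erase.2 ⟨?_, hgmem x hxs⟩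
      intro hcon
      have : x = top := g.injective (hcon.trans hgtop.symm)
      rw [mem_stdSimp] at hx
      rw [this] at hx
      simp [htdef] at hx
    · rw [Finset.card_image_of_injective _ g.injective,
        card_stdSimp n k (by omega), Finset.card_erase_of_mem ha, hσ]
      omega
  · apply Finset.eq_of_subset_of_card_le
    · intro y hy
      obtain ⟨x, hx, rfl⟩ := Finset.mem_image.1 hy
      rw [mem_stdSimp'] at hx
      have hxs : x ∈ s := by rw [hs, mem_stdSimp]; omega
      refine Finset.mem_erase.2 ⟨?_, hgmem x hxs⟩
      intro hcon
      have : x = zero := g.injective (hcon.trans hgzero.symm)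
      rw [this] at hx
      simp [hzdef] at hx
    · rw [Finset.card_image_of_injective _ g.injective,
        card_stdSimp' n k hn, Finset.card_erase_of_mem hb, hσ]
      omega

lemma image_image_perm {n : ℕ} (g : Equiv.Perm (Fin n)) (Y : Finset (Finset (Fin n))) :
    Finset.image (fun σ => σ.image ⇑g⁻¹) (Finset.image (fun σ => σ.image ⇑g) Y) = Y := by
  rw [Finset.image_image]
  have : ((fun σ : Finset (Fin n) => σ.image ⇑g⁻¹) ∘ fun σ => σ.image ⇑g) = id := by
    funext σ
    simp only [Function.comp_apply, Finset.image_image, id]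
    ext x
    simp
  rw [this, Finset.image_id]

lemma powerset_image_perm {n : ℕ} (g : Equiv.Perm (Fin n)) (s : Finset (Fin n)) :
    Finset.image (fun σ => σ.image ⇑g) s.powerset = (s.image ⇑g).powerset := by
  ext t
  simp only [Finset.mem_image, Finset.mem_powerset]
  constructor
  · rintro ⟨u, hu, rfl⟩
    exact Finset.image_subset_image hu
  · intro ht
    refine ⟨t.image ⇑g⁻¹, ?_, ?_⟩
    · intro x hx
      obtain ⟨y, hy, rfl⟩ := Finset.mem_image.1 hx
      have := ht hy
      obtain ⟨z, hz, rfl⟩ := Finset.mem_image.1 this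
      simpa using hz
    · rw [Finset.image_image]
      ext x
      simp

section prob
variable {n : ℕ} {Ω : Type*} [MeasurableSpace Ω] (μ : Measure Ω) [IsProbabilityMeasure μ]

omit [IsProbabilityMeasure μ] in
lemma prb_nonneg (A : Set Ω) : 0 ≤ prb μ A := ENNReal.toReal_nonneg

lemma prb_mono {A B : Set Ω} (h : A ⊆ B) : prb μ A ≤ prb μ B :=
  ENNReal.toReal_mono (measure_ne_top μ B) (measure_mono h)

omit [IsProbabilityMeasure μ] in
lemma condP_nonneg (A B : Set Ω) : 0 ≤ condP μ A B :=
  div_nonneg (prb_nonneg μ _) (prb_nonneg μ _)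

lemma prb_compl_inter {A B : Set Ω} (hA : MeasurableSet A) :
    prb μ (Aᶜ ∩ B) = prb μ B - prb μ (A ∩ B) := by
  have h1 : μ (B ∩ A) + μ (B \ A) = μ B := measure_inter_add_diff B hA
  have h2 : B \ A = Aᶜ ∩ B := by ext ω; simp [Set.mem_diff, And.comm]
  have h3 : B ∩ A = A ∩ B := Set.inter_comm _ _
  rw [h2, h3] at h1
  have := congrArg ENNReal.toReal h1
  rw [ENNReal.toReal_add (measure_ne_top μ _) (measure_ne_top μ _)] at this
  simp only [prb]
  linarith

lemma prb_iUnion_le {i : ℕ} (f : Fin i → Set Ω) :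
    prb μ (⋃ j, f j) ≤ ∑ j, prb μ (f j) := by
  have h := measure_iUnion_le (μ := μ) f
  rw [tsum_fintype] at h
  calc prb μ (⋃ j, f j) ≤ (∑ j, μ (f j)).toReal :=
        ENNReal.toReal_mono (by
          refine (ENNReal.sum_lt_top.2 fun j _ => ?_).ne
          exact measure_lt_top μ _) h
    _ = ∑ j, prb μ (f j) := ENNReal.toReal_sum fun j _ => measure_ne_top μ _

lemma prb_eq_sum (f : Ω → Finset (Finset (Fin n)))
    (hm : ∀ Y, MeasurableSet {ω | f ω = Y})
    (P : Finset (Finset (Fin n)) → Prop) [DecidablePred P] :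
    prb μ {ω | P (f ω)} = ∑ Y ∈ Finset.univ.filter P, prb μ {ω | f ω = Y} := by
  classical
  have hU : {ω | P (f ω)} = ⋃ Y ∈ (Finset.univ.filter P : Finset _), {ω | f ω = Y} := by
    ext ω; simp
  have hdisj : (↑(Finset.univ.filter P) : Set _).PairwiseDisjoint
      (fun Y => {ω | f ω = Y}) := by
    intro Y1 _ Y2 _ hne
    rw [Function.onFun, Set.disjoint_left]
    intro ω h1 h2
    exact hne (h1.symm.trans h2)
  rw [prb, hU, measure_biUnion_finset hdisj (fun Y _ => hm Y),
    ENNReal.toReal_sum fun Y _ => measure_ne_top μ _]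
  rfl

omit [IsProbabilityMeasure μ] in
lemma measP (X : Ω → Finset (Finset (Fin n)))
    (hmeas : ∀ Y, MeasurableSet {ω | X ω = Y})
    (P : Finset (Finset (Fin n)) → Prop) : MeasurableSet {ω | P (X ω)} := by
  have : {ω | P (X ω)} = ⋃ (Y : Finset (Finset (Fin n))) (_ : P Y), {ω | X ω = Y} := by
    ext ω; simp
  rw [this]
  exact MeasurableSet.iUnion fun Y => MeasurableSet.iUnion fun _ => hmeas Y

set_option maxHeartbeats 1000000 in
lemma prb_perm (X : Ω → Finset (Finset (Fin n)))
    (hmeas : ∀ Y, MeasurableSet {ω | X ω = Y})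
    (hhom : Homogeneous μ X) (g : Equiv.Perm (Fin n)) (W : Finset (Finset (Fin n))) :
    prb μ {ω | Finset.image (fun σ => σ.image ⇑g) W ⊆ X ω} = prb μ {ω | W ⊆ X ω} := by
  classical
  have hFF : ∀ Y : Finset (Finset (Fin n)),
      Finset.image (fun σ => σ.image ⇑g) (Finset.image (fun σ => σ.image ⇑g⁻¹) Y) = Y := by
    intro Y
    have := image_image_perm g⁻¹ Y
    rwa [inv_inv] at this
  have hmeasF : ∀ Y, MeasurableSet {ω | Finset.image (fun σ => σ.image ⇑g) (X ω) = Y} := by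
    intro Y
    have : {ω | Finset.image (fun σ => σ.image ⇑g) (X ω) = Y} =
        {ω | X ω = Finset.image (fun σ => σ.image ⇑g⁻¹) Y} := by
      ext ω
      constructor
      · intro h
        show X ω = _
        rw [← h, image_image_perm]
      · intro h
        show Finset.image (fun σ => σ.image ⇑g) (X ω) = Y
        rw [h, hFF]
    rw [this]
    exact hmeas _
  have e1 : {ω | W ⊆ X ω} =
      {ω | W.image (fun σ => σ.image ⇑g) ⊆ Finset.image (fun σ => σ.image ⇑g) (X ω)} := by
    ext ω
    constructor
    · exact fun h => Finset.image_subset_image h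
    · intro h
      have := Finset.image_subset_image (f := fun σ => σ.image ⇑g⁻¹) h
      rwa [image_image_perm, image_image_perm] at this
  have h1 : prb μ {ω | W ⊆ X ω} =
      ∑ Y ∈ Finset.univ.filter (fun Y => W.image (fun σ => σ.image ⇑g) ⊆ Y),
        prb μ {ω | Finset.image (fun σ => σ.image ⇑g) (X ω) = Y} := by
    rw [e1]
    exact prb_eq_sum μ (fun ω => Finset.image (fun σ => σ.image ⇑g) (X ω)) hmeasF
      (fun Y => W.image (fun σ => σ.image ⇑g) ⊆ Y)
  have h2 : prb μ {ω | W.image (fun σ => σ.image ⇑g) ⊆ X ω} =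
      ∑ Y ∈ Finset.univ.filter (fun Y => W.image (fun σ => σ.image ⇑g) ⊆ Y),
        prb μ {ω | X ω = Y} :=
    prb_eq_sum μ X hmeas (fun Y => W.image (fun σ => σ.image ⇑g) ⊆ Y)
  rw [h2, h1]
  exact Finset.sum_congr rfl fun Y _ => (hhom g Y).symm

end prob

end Aux

set_option maxHeartbeats 1600000 in
lemma condP_simplex_le {n k : ℕ} (hn : k + 2 ≤ n)
    {Ω : Type*} [MeasurableSpace Ω] (μ : Measure Ω) [IsProbabilityMeasure μ]
    (X : Ω → Finset (Finset (Fin n)))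
    (hmeas : ∀ Y, MeasurableSet {ω | X ω = Y})
    (hXc : ∀ ω, SComplex (X ω))
    (hhom : Homogeneous μ X) (hsi : SpatInd μ X)
    (T : Finset (Finset (Fin n))) (htree : ∃ τ, SimpRootedTree n k T τ)
    (hTpos : 0 < prb μ {ω | T ⊆ X ω})
    (σj : Finset (Fin n)) (hcard : σj.card = k + 2) (hnot : σj ∉ T) :
    condP μ {ω | σj ∈ X ω} {ω | T ⊆ X ω} ≤ spar μ X k := by
  classical
  obtain ⟨τ0, htr⟩ := htree
  have hTc : SComplex T := tree_scomplex htr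
  obtain ⟨a, ha, b, hb, hab, habT⟩ := tree_missing_pair htr σj hcard hnot
  obtain ⟨g, hg1, hg2, hg3⟩ := exists_perm_std n k hn σj hcard a b ha hb hab
  have idmem : ∀ ρ : Finset (Fin n), {ω | ρ ∈ X ω} = {ω | ρ.powerset ⊆ X ω} := by
    intro ρ
    ext ω
    constructor
    · intro h τ hτ
      exact (hXc ω).2 ρ h τ hτ
    · intro h
      exact h (Finset.mem_powerset_self ρ)
  have hcast : ((k : ℤ) + 1) = ((k + 1 : ℕ) : ℤ) := by push_cast; ring
  -- transfers via homogeneity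
  have hNstd : prb μ {ω | (stdSimp n ((k + 1 : ℕ) : ℤ)).powerset ⊆ X ω} =
      prb μ {ω | σj.powerset ⊆ X ω} := by
    have h := prb_perm μ X hmeas hhom g ((stdSimp n ((k + 1 : ℕ) : ℤ)).powerset)
    rw [powerset_image_perm, hg1] at h
    exact h.symm
  have hDstd : prb μ {ω | (stdSimp n (k : ℤ)).powerset ∪ (stdSimp' n k).powerset ⊆ X ω} =
      prb μ {ω | (σj.erase a).powerset ∪ (σj.erase b).powerset ⊆ X ω} := by
    have h := prb_perm μ X hmeas hhom g
      ((stdSimp n (k : ℤ)).powerset ∪ (stdSimp' n k).powerset)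
    rw [Finset.image_union, powerset_image_perm, powerset_image_perm, hg2, hg3] at h
    exact h.symm
  -- monotonicity facts
  have hZpT : prb μ {ω | T ⊆ X ω} ≤ prb μ {ω | (T ∩ σj.powerset : Finset _) ⊆ X ω} :=
    prb_mono μ (fun ω hω ρ hρ => hω (Finset.mem_of_mem_inter_left hρ))
  have hZppos : 0 < prb μ {ω | (T ∩ σj.powerset : Finset _) ⊆ X ω} :=
    lt_of_lt_of_le hTpos hZpT
  have hsubZ : (T ∩ σj.powerset : Finset _) ⊆
      (σj.erase a).powerset ∪ (σj.erase b).powerset := by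
    intro ρ hρ
    have hρT : ρ ∈ T := (Finset.mem_inter.1 hρ).1
    have hρσ : ρ ⊆ σj := Finset.mem_powerset.1 (Finset.mem_inter.1 hρ).2
    by_cases haρ : a ∈ ρ
    · by_cases hbρ : b ∈ ρ
      · exfalso
        apply habT
        refine hTc.2 ρ hρT _ (Finset.mem_powerset.2 ?_)
        intro x hx
        rcases Finset.mem_insert.1 hx with rfl | hx'
        · exact haρ
        · rw [Finset.mem_singleton.1 hx']; exact hbρ
      · exact Finset.mem_union_right _
          (Finset.mem_powerset.2 (Finset.subset_erase.2 ⟨hρσ, hbρ⟩))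
    · exact Finset.mem_union_left _
        (Finset.mem_powerset.2 (Finset.subset_erase.2 ⟨hρσ, haρ⟩))
  have hDZ : prb μ {ω | (σj.erase a).powerset ∪ (σj.erase b).powerset ⊆ X ω} ≤
      prb μ {ω | (T ∩ σj.powerset : Finset _) ⊆ X ω} :=
    prb_mono μ (fun ω hω ρ hρ => hω (hsubZ hρ))
  have hND : prb μ {ω | σj.powerset ⊆ X ω} ≤
      prb μ {ω | (σj.erase a).powerset ∪ (σj.erase b).powerset ⊆ X ω} := by
    refine prb_mono μ (fun ω hω ρ hρ => ?_)
    rcases Finset.mem_union.1 hρ with h | h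
    · exact hω (Finset.mem_powerset.2
        ((Finset.mem_powerset.1 h).trans (Finset.erase_subset _ _)))
    · exact hω (Finset.mem_powerset.2
        ((Finset.mem_powerset.1 h).trans (Finset.erase_subset _ _)))
  -- identify the sets in `spar`
  have hsetD : ({ω | stdSimp n (k : ℤ) ∈ X ω} ∩ {ω | stdSimp' n k ∈ X ω}) =
      {ω | (stdSimp n (k : ℤ)).powerset ∪ (stdSimp' n k).powerset ⊆ X ω} := by
    rw [idmem (stdSimp n (k : ℤ)), idmem (stdSimp' n k)]
    ext ω
    simp only [Set.mem_inter_iff, Set.mem_setOf_eq, Finset.union_subset_iff]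
  have hsub1 : stdSimp n (k : ℤ) ⊆ stdSimp n ((k + 1 : ℕ) : ℤ) := by
    intro v hv
    rw [mem_stdSimp] at hv ⊢
    omega
  have hsub2 : stdSimp' n k ⊆ stdSimp n ((k + 1 : ℕ) : ℤ) := by
    intro v hv
    rw [mem_stdSimp'] at hv
    rw [mem_stdSimp]
    omega
  have hsetNum : {ω | stdSimp n ((k + 1 : ℕ) : ℤ) ∈ X ω} ∩
      ({ω | stdSimp n (k : ℤ) ∈ X ω} ∩ {ω | stdSimp' n k ∈ X ω}) =
      {ω | stdSimp n ((k + 1 : ℕ) : ℤ) ∈ X ω} := by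
    refine Set.inter_eq_left.2 (fun ω hω => ?_)
    constructor
    · exact (hXc ω).2 _ hω _ (Finset.mem_powerset.2 hsub1)
    · exact (hXc ω).2 _ hω _ (Finset.mem_powerset.2 hsub2)
  have hidT : {ω | σj ∈ X ω} ∩ {ω | T ⊆ X ω} =
      {ω | (T ∪ σj.powerset : Finset _) ⊆ X ω} := by
    rw [idmem σj]
    ext ω
    simp only [Set.mem_inter_iff, Set.mem_setOf_eq, Finset.union_subset_iff]
    tauto
  by_cases hDpos : 0 < prb μ {ω | (σj.erase a).powerset ∪ (σj.erase b).powerset ⊆ X ω}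
  · -- positive case
    have hspar : spar μ X k =
        prb μ {ω | σj.powerset ⊆ X ω} /
          prb μ {ω | (σj.erase a).powerset ∪ (σj.erase b).powerset ⊆ X ω} := by
      unfold spar condP
      rw [hcast, hsetNum, idmem (stdSimp n ((k + 1 : ℕ) : ℤ)), hNstd, hsetD, hDstd, if_pos hDpos]
    have hsieq := hsi T σj.powerset hTc (scomplex_powerset' σj)
    have hcond : condP μ {ω | σj ∈ X ω} {ω | T ⊆ X ω} =
        prb μ {ω | σj.powerset ⊆ X ω} /
          prb μ {ω | (T ∩ σj.powerset : Finset _) ⊆ X ω} := by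
      rw [condP, hidT]
      have hA : prb μ {ω | (T ∪ σj.powerset : Finset _) ⊆ X ω} =
          prb μ {ω | T ⊆ X ω} * prb μ {ω | σj.powerset ⊆ X ω} /
            prb μ {ω | (T ∩ σj.powerset : Finset _) ⊆ X ω} :=
        (eq_div_iff hZppos.ne').2 hsieq
      rw [hA, div_div, mul_comm
        (prb μ {ω | (T ∩ σj.powerset : Finset _) ⊆ X ω}) (prb μ {ω | T ⊆ X ω}),
        mul_div_mul_left _ _ hTpos.ne']
    rw [hcond, hspar]
    rw [div_le_div_iff₀ hZppos hDpos]
    have hN0 : 0 ≤ prb μ {ω | σj.powerset ⊆ X ω} := prb_nonneg μ _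
    exact mul_le_mul_of_nonneg_left hDZ hN0
  · -- degenerate case
    have hD0 : prb μ {ω | (σj.erase a).powerset ∪ (σj.erase b).powerset ⊆ X ω} = 0 :=
      le_antisymm (not_lt.1 hDpos) (prb_nonneg μ _)
    have hspar : spar μ X k = 0 := by
      unfold spar
      rw [hcast, hsetD, hDstd, if_neg hDpos]
    rw [hspar]
    have hnum : prb μ ({ω | σj ∈ X ω} ∩ {ω | T ⊆ X ω}) = 0 := by
      refine le_antisymm ?_ (prb_nonneg μ _)
      calc prb μ ({ω | σj ∈ X ω} ∩ {ω | T ⊆ X ω}) ≤ prb μ {ω | σj ∈ X ω} :=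
            prb_mono μ Set.inter_subset_left
        _ = prb μ {ω | σj.powerset ⊆ X ω} := by rw [idmem]
        _ ≤ prb μ {ω | (σj.erase a).powerset ∪ (σj.erase b).powerset ⊆ X ω} := hND
        _ = 0 := hD0
    unfold condP
    rw [hnum, zero_div]


/-- for a `(k+1)`-tree `T` with `P(T ⊆ X) > 0` and `(k+1)`-simplices
`σ₁,…,σ_i ∉ T`, one has `P(σ_j ∉ X for all j | T ⊆ X) ≥ 1 - i·s_k`. -/
theorem tree_avoid_simplices_condP (n k : ℕ) (hn : k + 2 ≤ n)
    {Ω : Type*} [MeasurableSpace Ω] (μ : Measure Ω) [IsProbabilityMeasure μ]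
    (X : Ω → Finset (Finset (Fin n)))
    (hmeas : ∀ Y, MeasurableSet {ω | X ω = Y})
    (hXc : ∀ ω, SComplex (X ω))
    (hhom : Homogeneous μ X) (hsi : SpatInd μ X)
    (T : Finset (Finset (Fin n))) (hT : ∃ τ, SimpRootedTree n k T τ)
    (hTpos : 0 < prb μ {ω | T ⊆ X ω})
    (i : ℕ) (σ : Fin i → Finset (Fin n)) (hσinj : Function.Injective σ)
    (hσcard : ∀ j, (σ j).card = k + 2) (hσT : ∀ j, σ j ∉ T) :
    1 - (i : ℝ) * spar μ X k ≤ condP μ {ω | ∀ j, σ j ∉ X ω} {ω | T ⊆ X ω} := by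
  classical
  have hA : MeasurableSet {ω | ∃ j, σ j ∈ X ω} :=
    measP X hmeas (fun Y => ∃ j, σ j ∈ Y)
  have hcompl : {ω | ∀ j, σ j ∉ X ω} = {ω | ∃ j, σ j ∈ X ω}ᶜ := by
    ext ω; simp
  have hU : {ω | ∃ j, σ j ∈ X ω} ∩ {ω | T ⊆ X ω} =
      ⋃ j, ({ω | σ j ∈ X ω} ∩ {ω | T ⊆ X ω}) := by
    ext ω
    simp only [Set.mem_inter_iff, Set.mem_setOf_eq, Set.mem_iUnion]
    tauto
  have hEB : prb μ ({ω | ∃ j, σ j ∈ X ω} ∩ {ω | T ⊆ X ω}) ≤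
      (i : ℝ) * spar μ X k * prb μ {ω | T ⊆ X ω} := by
    calc prb μ ({ω | ∃ j, σ j ∈ X ω} ∩ {ω | T ⊆ X ω})
        = prb μ (⋃ j, ({ω | σ j ∈ X ω} ∩ {ω | T ⊆ X ω})) := by rw [hU]
      _ ≤ ∑ j, prb μ ({ω | σ j ∈ X ω} ∩ {ω | T ⊆ X ω}) := prb_iUnion_le μ _
      _ ≤ ∑ _j : Fin i, spar μ X k * prb μ {ω | T ⊆ X ω} := by
          refine Finset.sum_le_sum fun j _ => ?_
          have hcle : condP μ {ω | σ j ∈ X ω} {ω | T ⊆ X ω} ≤ spar μ X k :=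
            condP_simplex_le hn μ X hmeas hXc hhom hsi T hT hTpos (σ j)
              (hσcard j) (hσT j)
          have := (div_le_iff₀ hTpos).1 hcle
          simpa [condP] using this
      _ = (i : ℝ) * spar μ X k * prb μ {ω | T ⊆ X ω} := by
          rw [Finset.sum_const, Finset.card_univ, Fintype.card_fin, nsmul_eq_mul]
          ring
  rw [hcompl]
  unfold condP
  rw [prb_compl_inter μ hA]
  have h2 : prb μ ({ω | ∃ j, σ j ∈ X ω} ∩ {ω | T ⊆ X ω}) / prb μ {ω | T ⊆ X ω} ≤
      (i : ℝ) * spar μ X k := (div_le_iff₀ hTpos).2 hEB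
  rw [sub_div, div_self hTpos.ne']
  linarith
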